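/- Let p, q ∈ (1,∞) and n a nonnegative integer. Then ∫₀^{π_{p,q}/2} sin_{p,q}^{qn+q−1}(t) dt = [n! / ((1/p* + 1)_n)] · p*/q, where p* = p/(p−1). -/

import Mathlib

open Set MeasureTheory Filter

/-- Generalized arcsine: `arcsin_{p,q}(x) = ∫₀ˣ (1 - tᵠ)^(-1/p) dt`. -/
noncomputable def gArcsin (p q x : ℝ) : ℝ := ∫ t in (0:ℝ)..x, (1 - t ^ q) ^ (-(1 / p))

/-- Generalized pi: `π_{p,q} = 2 ∫₀¹ (1 - tᵠ)^(-1/p) dt`. -/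
noncomputable def gPi (p q : ℝ) : ℝ := 2 * gArcsin p q 1

/-- `S` is the generalized sine `sin_{p,q}` (the inverse of `gArcsin p q` on `[0,1]`). -/
def IsGSin (p q : ℝ) (S : ℝ → ℝ) : Prop :=
  ∀ y ∈ Icc (0:ℝ) 1, S (gArcsin p q y) = y

/-- `C` is the generalized cosine `cos_{p,q}`, the derivative of `S = sin_{p,q}`
on `[0, π_{p,q}/2]`. -/
def IsGCos (p q : ℝ) (S C : ℝ → ℝ) : Prop :=
  ∀ x ∈ Icc (0:ℝ) (gPi p q / 2), HasDerivWithinAt S (C x) (Icc (0:ℝ) (gPi p q / 2)) x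

open intervalIntegral

lemma contAux {p q : ℝ} (hq : 1 < q) {β : ℝ} :
    ContinuousOn (fun y : ℝ => y ^ β * (1 - y ^ q) ^ (-(1/p))) (Ioo 0 1) := by
  have h1 : ∀ y ∈ Ioo (0:ℝ) 1, y ≠ 0 ∨ (0:ℝ) ≤ β := fun y hy => Or.inl (ne_of_gt hy.1)
  have h2 : ContinuousOn (fun y : ℝ => 1 - y ^ q) (Ioo 0 1) :=
    continuousOn_const.sub (continuousOn_id.rpow_const fun y hy => Or.inl (ne_of_gt hy.1))
  refine (continuousOn_id.rpow_const h1).mul (h2.rpow_const fun y hy => Or.inl ?_)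
  have : y ^ q < 1 := Real.rpow_lt_one hy.1.le hy.2 (by linarith)
  intro h
  rw [sub_eq_zero] at h
  exact absurd h.symm (ne_of_lt this)

lemma measAux {p q : ℝ} (hq : 1 < q) {β : ℝ} :
    AEStronglyMeasurable (fun y : ℝ => y ^ β * (1 - y ^ q) ^ (-(1/p)))
      (volume.restrict (Set.uIoc (0:ℝ) 1)) := by
  rw [uIoc_of_le (by norm_num : (0:ℝ) ≤ 1), ← MeasureTheory.restrict_Ioo_eq_restrict_Ioc]
  exact (contAux hq).aestronglyMeasurable measurableSet_Ioo

lemma integrableAux {p q : ℝ} (hp : 1 < p) (hq : 1 < q) {β : ℝ} (hβ : 0 ≤ β) :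
    IntervalIntegrable (fun y : ℝ => y ^ β * (1 - y ^ q) ^ (-(1/p))) volume 0 1 := by
  have hp0 : 0 < p := lt_trans one_pos hp
  have h1p : 1/p < 1 := by rw [div_lt_one hp0]; exact hp
  have hbase : IntervalIntegrable (fun x : ℝ => x ^ (-(1/p))) volume 0 1 :=
    intervalIntegrable_rpow' (by linarith)
  have hg : IntervalIntegrable (fun y : ℝ => (1 - y) ^ (-(1/p))) volume 0 1 := by
    simpa using (hbase.comp_sub_left 1).symm
  refine hg.mono_fun (measAux hq) ?_
  filter_upwards [ae_restrict_mem measurableSet_uIoc] with y hy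
  rw [uIoc_of_le (by norm_num : (0:ℝ) ≤ 1)] at hy
  obtain ⟨hy0, hy1⟩ := hy
  have hyq : y ^ q ≤ y := by
    calc y ^ q ≤ y ^ (1:ℝ) := Real.rpow_le_rpow_of_exponent_ge hy0 hy1 hq.le
    _ = y := Real.rpow_one y
  have h1 : (0:ℝ) ≤ 1 - y ^ q := by linarith
  have hn1 : 0 ≤ y ^ β * (1 - y ^ q) ^ (-(1/p)) :=
    mul_nonneg (Real.rpow_nonneg hy0.le _) (Real.rpow_nonneg h1 _)
  rw [Real.norm_of_nonneg hn1, Real.norm_of_nonneg (Real.rpow_nonneg (by linarith) _)]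
  have hyβ : y ^ β ≤ 1 := Real.rpow_le_one hy0.le hy1 hβ
  have key : (1 - y ^ q) ^ (-(1/p)) ≤ (1 - y) ^ (-(1/p)) := by
    rcases eq_or_lt_of_le hy1 with h | h
    · subst h
      rw [Real.one_rpow, sub_self]
    · exact Real.rpow_le_rpow_of_nonpos (by linarith) (by linarith)
        (by rw [neg_nonpos]; positivity)
  calc y ^ β * (1 - y ^ q) ^ (-(1/p)) ≤ 1 * (1 - y) ^ (-(1/p)) :=
        mul_le_mul hyβ key (Real.rpow_nonneg h1 _) one_pos.le
  _ = (1 - y) ^ (-(1/p)) := one_mul _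

lemma integrableAux' {p q : ℝ} (hp : 1 < p) (hq : 1 < q) :
    IntervalIntegrable (fun y : ℝ => (1 - y ^ q) ^ (-(1/p))) volume 0 1 := by
  have := integrableAux hp hq (β := 0) le_rfl
  simpa [Real.rpow_zero] using this

lemma contAux' {p q : ℝ} (hq : 1 < q) :
    ContinuousOn (fun y : ℝ => (1 - y ^ q) ^ (-(1/p))) (Ioo 0 1) := by
  have := contAux (p := p) hq (β := 0)
  simpa [Real.rpow_zero] using this

lemma gDeriv {p q : ℝ} (hp : 1 < p) (hq : 1 < q) :
    ∀ y ∈ Ioo (0:ℝ) 1, HasDerivAt (gArcsin p q) ((1 - y ^ q) ^ (-(1/p))) y := by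
  intro y hy
  have hsub : uIcc (0:ℝ) y ⊆ uIcc (0:ℝ) 1 := by
    rw [uIcc_of_le hy.1.le, uIcc_of_le (by norm_num : (0:ℝ) ≤ 1)]
    exact Icc_subset_Icc le_rfl hy.2.le
  have hint : IntervalIntegrable (fun t : ℝ => (1 - t ^ q) ^ (-(1/p))) volume 0 y :=
    (integrableAux' hp hq).mono_set hsub
  exact intervalIntegral.integral_hasDerivAt_right hint
    ((contAux' hq).stronglyMeasurableAtFilter isOpen_Ioo y hy)
    ((contAux' hq).continuousAt (isOpen_Ioo.mem_nhds hy))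

lemma gCont {p q : ℝ} (hp : 1 < p) (hq : 1 < q) :
    ContinuousOn (gArcsin p q) (Icc 0 1) := by
  have h : IntegrableOn (fun t : ℝ => (1 - t ^ q) ^ (-(1/p))) (uIcc 0 1) volume := by
    rw [uIcc_of_le (by norm_num : (0:ℝ) ≤ 1), integrableOn_Icc_iff_integrableOn_Ioc]
    exact ((intervalIntegrable_iff_integrableOn_Ioc_of_le (by norm_num)).mp
      (integrableAux' hp hq))
  have := intervalIntegral.continuousOn_primitive_interval h
  rw [uIcc_of_le (by norm_num : (0:ℝ) ≤ 1)] at this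
  exact this

lemma gMono {p q : ℝ} (hp : 1 < p) (hq : 1 < q) :
    StrictMonoOn (gArcsin p q) (Icc 0 1) := by
  intro a ha b hb hab
  have hq0 : 0 < q := by linarith
  have hsub : ∀ c ∈ Icc (0:ℝ) 1, uIcc (0:ℝ) c ⊆ uIcc (0:ℝ) 1 := by
    intro c hc
    rw [uIcc_of_le hc.1, uIcc_of_le (by norm_num : (0:ℝ) ≤ 1)]
    exact Icc_subset_Icc le_rfl hc.2
  have hinta : IntervalIntegrable (fun t : ℝ => (1 - t ^ q) ^ (-(1/p))) volume 0 a :=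
    (integrableAux' hp hq).mono_set (hsub a ha)
  have hintb : IntervalIntegrable (fun t : ℝ => (1 - t ^ q) ^ (-(1/p))) volume 0 b :=
    (integrableAux' hp hq).mono_set (hsub b hb)
  have hintab : IntervalIntegrable (fun t : ℝ => (1 - t ^ q) ^ (-(1/p))) volume a b := by
    refine (integrableAux' hp hq).mono_set ?_
    rw [uIcc_of_le hab.le, uIcc_of_le (by norm_num : (0:ℝ) ≤ 1)]
    exact Icc_subset_Icc ha.1 hb.2
  have hdiff : gArcsin p q b - gArcsin p q a = ∫ t in a..b, (1 - t ^ q) ^ (-(1/p)) := by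
    rw [gArcsin, gArcsin]
    exact intervalIntegral.integral_interval_sub_left hintb hinta
  have hpos : 0 < ∫ t in a..b, (1 - t ^ q) ^ (-(1/p)) := by
    refine intervalIntegral.intervalIntegral_pos_of_pos_on hintab ?_ hab
    intro x hx
    have hx0 : 0 < x := lt_of_le_of_lt ha.1 hx.1
    have hx1 : x < 1 := lt_of_lt_of_le hx.2 hb.2
    have : x ^ q < 1 := Real.rpow_lt_one hx0.le hx1 hq0
    exact Real.rpow_pos_of_pos (by linarith) _
  linarith

lemma gZero {p q : ℝ} : gArcsin p q 0 = 0 := intervalIntegral.integral_same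

lemma gImg {p q : ℝ} (hp : 1 < p) (hq : 1 < q) :
    gArcsin p q '' (Ioo 0 1) = Ioo 0 (gPi p q / 2) := by
  have h2 : gPi p q / 2 = gArcsin p q 1 := by rw [gPi]; ring
  have h01 : (0:ℝ) ∈ Icc (0:ℝ) 1 := by norm_num
  have h11 : (1:ℝ) ∈ Icc (0:ℝ) 1 := by norm_num
  apply Subset.antisymm
  · rintro _ ⟨y, hy, rfl⟩
    have hyI : y ∈ Icc (0:ℝ) 1 := ⟨hy.1.le, hy.2.le⟩
    constructor
    · have := gMono hp hq h01 hyI hy.1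
      rwa [gZero] at this
    · rw [h2]
      exact gMono hp hq hyI h11 hy.2
  · rw [h2]
    have := intermediate_value_Ioo (by norm_num : (0:ℝ) ≤ 1) (gCont hp hq)
    rwa [gZero] at this

lemma substAux {p q : ℝ} (hp : 1 < p) (hq : 1 < q) (S : ℝ → ℝ) (hS : IsGSin p q S)
    (α : ℝ) :
    ∫ t in (0:ℝ)..(gPi p q / 2), S t ^ α
      = ∫ y in (0:ℝ)..1, y ^ α * (1 - y ^ q) ^ (-(1/p)) := by
  have h2 : gPi p q / 2 = gArcsin p q 1 := by rw [gPi]; ring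
  have hpi : 0 < gPi p q / 2 := by
    rw [h2, ← gZero (p := p) (q := q)]
    exact gMono hp hq (by norm_num) (by norm_num) one_pos
  have key : ∫ x in gArcsin p q '' (Ioo 0 1), S x ^ α
      = ∫ y in Ioo (0:ℝ) 1, |(1 - y ^ q) ^ (-(1/p))| • (S (gArcsin p q y)) ^ α :=
    integral_image_eq_integral_abs_deriv_smul measurableSet_Ioo
      (fun y hy => (gDeriv hp hq y hy).hasDerivWithinAt)
      ((gMono hp hq).injOn.mono Ioo_subset_Icc_self) _
  rw [gImg hp hq] at key
  rw [intervalIntegral.integral_of_le hpi.le, intervalIntegral.integral_of_le zero_le_one,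
    MeasureTheory.integral_Ioc_eq_integral_Ioo, MeasureTheory.integral_Ioc_eq_integral_Ioo,
    key]
  refine MeasureTheory.setIntegral_congr_fun measurableSet_Ioo (fun y hy => ?_)
  have hSy : S (gArcsin p q y) = y := hS y ⟨hy.1.le, hy.2.le⟩
  have hyq : y ^ q < 1 := Real.rpow_lt_one hy.1.le hy.2 (by linarith)
  rw [hSy, smul_eq_mul, abs_of_nonneg (Real.rpow_nonneg (by linarith) _), mul_comm]

lemma Jzero {p q : ℝ} (hp : 1 < p) (hq : 1 < q) :
    ∫ y in (0:ℝ)..1, y ^ (q - 1) * (1 - y ^ q) ^ (-(1/p)) = 1 / (q * (1 - 1/p)) := by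
  have hp0 : 0 < p := lt_trans one_pos hp
  have h1p : 1/p < 1 := by rw [div_lt_one hp0]; exact hp
  set s : ℝ := 1 - 1/p with hs
  have hs0 : 0 < s := by rw [hs]; linarith
  have hq0 : 0 < q := by linarith
  set F : ℝ → ℝ := fun y => -(1/(q*s)) * (1 - y^q)^s with hF
  have hFcont : ContinuousOn F (Icc 0 1) :=
    continuousOn_const.mul ((continuousOn_const.sub
      (continuousOn_id.rpow_const fun y _ => Or.inr hq0.le)).rpow_const
      fun y _ => Or.inr hs0.le)
  have hFderiv : ∀ y ∈ Ioo (0:ℝ) 1, HasDerivAt F (y ^ (q-1) * (1 - y^q) ^ (-(1/p))) y := by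
    intro y hy
    have hy0 : 0 < y := hy.1
    have hyq : y ^ q < 1 := Real.rpow_lt_one hy0.le hy.2 hq0
    have hu : 0 < 1 - y ^ q := by linarith
    have h1 : HasDerivAt (fun z : ℝ => 1 - z ^ q) (-(q * y ^ (q-1))) y := by
      simpa using (Real.hasDerivAt_rpow_const (p := q) (Or.inl hy0.ne')).const_sub 1
    have h2 := (h1.rpow_const (p := s) (Or.inl hu.ne')).const_mul (-(1/(q*s)))
    convert h2 using 1
    · rfl
    · rfl
    rw [show s - 1 = -(1/p) by rw [hs]; ring]
    field_simp
  have hint : IntervalIntegrable (fun y : ℝ => y ^ (q-1) * (1 - y^q) ^ (-(1/p))) volume 0 1 :=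
    integrableAux hp hq (by linarith)
  rw [intervalIntegral.integral_eq_sub_of_hasDerivAt_of_le zero_le_one hFcont hFderiv hint]
  rw [hF]
  simp only [Real.one_rpow, sub_self, Real.zero_rpow hs0.ne', mul_zero,
    Real.zero_rpow hq0.ne', sub_zero, Real.one_rpow, mul_one, zero_sub, neg_neg]

lemma Jstep {p q : ℝ} (hp : 1 < p) (hq : 1 < q) (m : ℕ) :
    ∫ y in (0:ℝ)..1, y ^ (q*(↑m+1)+q-1) * (1 - y^q) ^ (-(1/p))
      = ((↑m+1)/((1-1/p)+↑m+1)) * ∫ y in (0:ℝ)..1, y ^ (q*(↑m:ℝ)+q-1) * (1 - y^q) ^ (-(1/p)) := by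
  have hp0 : 0 < p := lt_trans one_pos hp
  have h1p : 1/p < 1 := by rw [div_lt_one hp0]; exact hp
  set s : ℝ := 1 - 1/p with hs
  have hs0 : 0 < s := by rw [hs]; linarith
  have hq0 : 0 < q := by linarith
  have hm0 : (0:ℝ) ≤ (m:ℝ) := Nat.cast_nonneg m
  have hqm : 0 < q*(↑m:ℝ)+q := by nlinarith
  have he1 : (0:ℝ) ≤ q*(↑m+1)+q-1 := by nlinarith
  have he0 : (0:ℝ) ≤ q*(↑m:ℝ)+q-1 := by nlinarith
  set D : ℝ → ℝ := fun y => (1+((↑m:ℝ)+1)/s) * (y ^ (q*(↑m+1)+q-1) * (1 - y^q) ^ (-(1/p)))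
      - (((↑m:ℝ)+1)/s) * (y ^ (q*(↑m:ℝ)+q-1) * (1 - y^q) ^ (-(1/p))) with hD
  set F : ℝ → ℝ := fun y => -(1/(q*s)) * (y ^ (q*(↑m:ℝ)+q) * (1 - y^q)^s) with hF
  have hFcont : ContinuousOn F (Icc 0 1) :=
    continuousOn_const.mul ((continuousOn_id.rpow_const fun y _ => Or.inr hqm.le).mul
      ((continuousOn_const.sub
        (continuousOn_id.rpow_const fun y _ => Or.inr hq0.le)).rpow_const
        fun y _ => Or.inr hs0.le))
  have hFderiv : ∀ y ∈ Ioo (0:ℝ) 1, HasDerivAt F (D y) y := by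
    intro y hy
    have hy0 : 0 < y := hy.1
    have hyq : y ^ q < 1 := Real.rpow_lt_one hy0.le hy.2 hq0
    have hu : 0 < 1 - y ^ q := by linarith
    have hA : HasDerivAt (fun z : ℝ => z ^ (q*(↑m:ℝ)+q)) ((q*(↑m:ℝ)+q) * y^(q*(↑m:ℝ)+q-1)) y :=
      Real.hasDerivAt_rpow_const (Or.inl hy0.ne')
    have h1 : HasDerivAt (fun z : ℝ => 1 - z ^ q) (-(q * y ^ (q-1))) y := by
      simpa using (Real.hasDerivAt_rpow_const (p := q) (Or.inl hy0.ne')).const_sub 1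
    have hB := h1.rpow_const (p := s) (Or.inl hu.ne')
    have h2 := (hA.mul hB).const_mul (-(1/(q*s)))
    convert h2 using 1
    · rfl
    · rfl
    · rfl
    have e1 : (1 - y^q)^s = (1-y^q) * (1-y^q)^(-(1/p)) := by
      rw [show s = 1 + (-(1/p)) by rw [hs]; ring, Real.rpow_add hu, Real.rpow_one]
    have e2 : y ^ (q*(↑m:ℝ)+q) = y ^ (q*(↑m:ℝ)+q-1) * y := by
      have := Real.rpow_add_one hy0.ne' (q*(↑m:ℝ)+q-1)
      rwa [sub_add_cancel] at this
    have e3 : y ^ (q*((↑m:ℝ)+1)+q-1) = y ^ (q*(↑m:ℝ)+q-1) * y ^ q := by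
      rw [show q*((↑m:ℝ)+1)+q-1 = (q*(↑m:ℝ)+q-1)+q by ring, Real.rpow_add hy0]
    have e4 : y ^ (q-1) * y = y ^ q := by
      rw [← Real.rpow_add_one hy0.ne' (q-1), sub_add_cancel]
    rw [hD]
    simp only []
    rw [e1, e2, e3, show s - 1 = -(1/p) by rw [hs]; ring]
    set B : ℝ := (1 - y^q) ^ (-(1/p)) with hBdef
    set A : ℝ := y ^ (q*(↑m:ℝ)+q-1) with hAdef
    field_simp
    linear_combination (-(A*B)*q*s + (p⁻¹ - p⁻¹^2)*q*A*B
      + A*B*(p⁻¹ + q - 1 - 2*p⁻¹*q + p⁻¹^2*q)) * e4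
  have hint1 : IntervalIntegrable (fun y : ℝ => y ^ (q*(↑m+1)+q-1) * (1 - y^q) ^ (-(1/p)))
      volume 0 1 := integrableAux hp hq he1
  have hint0 : IntervalIntegrable (fun y : ℝ => y ^ (q*(↑m:ℝ)+q-1) * (1 - y^q) ^ (-(1/p)))
      volume 0 1 := integrableAux hp hq he0
  have hDint : IntervalIntegrable D volume 0 1 := by
    rw [hD]
    exact (hint1.const_mul _).sub (hint0.const_mul _)
  have hFTC := intervalIntegral.integral_eq_sub_of_hasDerivAt_of_le zero_le_one hFcont hFderiv hDint
  have hF1 : F 1 = 0 := by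
    rw [hF]
    simp [Real.one_rpow, Real.zero_rpow hs0.ne']
  have hF0 : F 0 = 0 := by
    rw [hF]
    simp [Real.zero_rpow hqm.ne']
  rw [hF1, hF0, sub_zero] at hFTC
  have hexp : ∫ y in (0:ℝ)..1, D y
      = (1+((↑m:ℝ)+1)/s) * (∫ y in (0:ℝ)..1, y ^ (q*(↑m+1)+q-1) * (1 - y^q) ^ (-(1/p)))
        - (((↑m:ℝ)+1)/s) * ∫ y in (0:ℝ)..1, y ^ (q*(↑m:ℝ)+q-1) * (1 - y^q) ^ (-(1/p)) := by
    rw [hD]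
    rw [intervalIntegral.integral_sub (hint1.const_mul _) (hint0.const_mul _),
      intervalIntegral.integral_const_mul, intervalIntegral.integral_const_mul]
  rw [hexp] at hFTC
  set K1 := ∫ y in (0:ℝ)..1, y ^ (q*(↑m+1)+q-1) * (1 - y^q) ^ (-(1/p))
  set K0 := ∫ y in (0:ℝ)..1, y ^ (q*(↑m:ℝ)+q-1) * (1 - y^q) ^ (-(1/p))
  have hden : s + (↑m:ℝ) + 1 ≠ 0 := by positivity
  field_simp at hFTC ⊢
  linarith [hFTC]

lemma Jval {p q : ℝ} (hp : 1 < p) (hq : 1 < q) (n : ℕ) :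
    ∫ y in (0:ℝ)..1, y ^ (q*(↑n:ℝ)+q-1) * (1 - y^q) ^ (-(1/p))
      = (n.factorial : ℝ) / (Polynomial.eval ((1-1/p) + 1) (ascPochhammer ℝ n)) * (1/((1-1/p)*q)) := by
  have hp0 : 0 < p := lt_trans one_pos hp
  have h1p : 1/p < 1 := by rw [div_lt_one hp0]; exact hp
  have hs0 : (0:ℝ) < 1 - 1/p := by linarith
  induction n with
  | zero =>
      rw [show q*((0:ℕ):ℝ)+q-1 = q-1 by push_cast; ring]
      rw [Jzero hp hq]
      simp only [Nat.factorial_zero, Nat.cast_one, ascPochhammer_zero, Polynomial.eval_one]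
      ring
  | succ m ih =>
      have hstep := Jstep hp hq m
      rw [show q*(((m+1:ℕ)):ℝ)+q-1 = q*((m:ℝ)+1)+q-1 by push_cast; ring]
      rw [hstep, ih, ascPochhammer_succ_eval, Nat.factorial_succ]
      have hE : (0:ℝ) < Polynomial.eval ((1-1/p) + 1) (ascPochhammer ℝ m) :=
        ascPochhammer_pos m _ (by linarith)
      have hden : (0:ℝ) < (1-1/p) + (m:ℝ) + 1 := by positivity
      push_cast
      field_simp
      ring

/-- Corollary 3.5, third formula:
`∫₀^{π_{p,q}/2} sin_{p,q}^{qn+q-1} t dt = (1)ₙ/((1/p* + 1)ₙ) · p*/q`, where `(1)ₙ = n!`. -/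
theorem stmt_12 (p q : ℝ) (n : ℕ) (hp : 1 < p) (hq : 1 < q)
    (S : ℝ → ℝ) (hS : IsGSin p q S) :
    ∫ t in (0:ℝ)..(gPi p q / 2), S t ^ (q * (n : ℝ) + q - 1) =
      (Nat.factorial n : ℝ) /
          (ascPochhammer ℝ n).eval (1 / (p / (p - 1)) + 1) *
        (p / (p - 1) / q) := by
  have hp0 : 0 < p := lt_trans one_pos hp
  have hp1 : p - 1 ≠ 0 := by intro h; linarith [sub_eq_zero.mp h]
  have e1 : 1 / (p / (p - 1)) = 1 - 1 / p := by
    rw [one_div_div]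
    field_simp
  have e2 : p / (p - 1) / q = 1 / ((1 - 1 / p) * q) := by
    have hq0 : q ≠ 0 := by positivity
    field_simp
  rw [substAux hp hq S hS (q * ↑n + q - 1), Jval hp hq n, e1, e2]
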